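/- In the generalized linear model with ‖x‖₂ ≤ B almost surely, ‖w*‖₂ ≤ R, and σ strictly increasing, differentiable with σ'(t) ≥ γ > 0 on [−BR, BR], the population risk L(w) = (1/2)E[(y − σ(wᵀx))²] is 2γ-weakly-quasi-convex on {w : ‖w‖₂ ≤ R} with respect to w*: ⟨∇L(w), w − w*⟩ ≥ 2γ(L(w) − L(w*)). -/

import Mathlib

open MeasureTheory Finset

/-- Pointwise weak-quasi-convexity inequality via the mean value theorem. -/
lemma pt_ineq (σ : ℝ → ℝ) (hσdiff : Differentiable ℝ σ) (γ M : ℝ) (hγ : 0 < γ)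
    (hσd : ∀ t ∈ Set.Icc (-M) M, γ ≤ deriv σ t ∧ deriv σ t ≤ 1)
    (a b : ℝ) (ha : |a| ≤ M) (hb : |b| ≤ M) :
    γ * (σ a - σ b) ^ 2 ≤ (σ a - σ b) * deriv σ a * (a - b) := by
  obtain ⟨ha1, ha2⟩ := abs_le.mp ha
  obtain ⟨hb1, hb2⟩ := abs_le.mp hb
  have haM : a ∈ Set.Icc (-M) M := ⟨ha1, ha2⟩
  have key : ∀ u v : ℝ, u < v → -M ≤ u → v ≤ M →
      ∃ c ∈ Set.Icc (-M) M, σ v - σ u = deriv σ c * (v - u) := by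
    intro u v huv hu hv
    obtain ⟨c, hc, hder⟩ := exists_deriv_eq_slope σ huv hσdiff.continuous.continuousOn
      (hσdiff.differentiableOn)
    refine ⟨c, ⟨le_trans hu hc.1.le, le_trans hc.2.le hv⟩, ?_⟩
    have hne : v - u ≠ 0 := sub_ne_zero.mpr huv.ne'
    rw [eq_div_iff hne] at hder
    linarith [hder]
  rcases lt_trichotomy a b with h | h | h
  · obtain ⟨c, hcM, hc⟩ := key a b h ha1 hb2
    obtain ⟨hγc, hc1⟩ := hσd c hcM
    obtain ⟨hγa, ha1'⟩ := hσd a haM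
    have hab : σ a - σ b = deriv σ c * (a - b) := by linarith [hc]
    rw [hab]
    have h0 : 0 ≤ deriv σ c := le_trans hγ.le hγc
    have h1 : γ * deriv σ c ≤ deriv σ a :=
      le_trans (mul_le_of_le_one_right hγ.le hc1) hγa
    have h2 : 0 ≤ (a - b) ^ 2 * (deriv σ c * (deriv σ a - γ * deriv σ c)) :=
      mul_nonneg (sq_nonneg _) (mul_nonneg h0 (by linarith))
    nlinarith [h2]
  · subst h; simp
  · obtain ⟨c, hcM, hc⟩ := key b a h hb1 ha2
    obtain ⟨hγc, hc1⟩ := hσd c hcM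
    obtain ⟨hγa, ha1'⟩ := hσd a haM
    have hab : σ a - σ b = deriv σ c * (a - b) := by linarith [hc]
    rw [hab]
    have h0 : 0 ≤ deriv σ c := le_trans hγ.le hγc
    have h1 : γ * deriv σ c ≤ deriv σ a :=
      le_trans (mul_le_of_le_one_right hγ.le hc1) hγa
    have h2 : 0 ≤ (a - b) ^ 2 * (deriv σ c * (deriv σ a - γ * deriv σ c)) :=
      mul_nonneg (sq_nonneg _) (mul_nonneg h0 (by linarith))
    nlinarith [h2]

/-- In the generalized linear model with ‖x‖₂ ≤ B a.s., ‖w*‖₂ ≤ R,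
σ strictly increasing and differentiable with γ ≤ σ' ≤ 1 on [−BR, BR], the population
risk L(w) = (1/2)E[(y − σ(wᵀx))²] is 2γ-weakly-quasi-convex on {w : ‖w‖₂ ≤ R} w.r.t. w*:
⟨∇L(w), w − w*⟩ ≥ 2γ(L(w) − L(w*)), where
∇L(w) = E[(σ(wᵀx) − σ(w*ᵀx))σ'(wᵀx)x]. -/
theorem stmt10 {d : ℕ} {Ω : Type*} [MeasurableSpace Ω]
    (μ : Measure Ω) [IsProbabilityMeasure μ]
    (X : Ω → Fin d → ℝ) (hX : Measurable X)
    (ε : Ω → ℝ) (hε : Measurable ε)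
    (σ : ℝ → ℝ) (hσmono : StrictMono σ) (hσdiff : Differentiable ℝ σ)
    (B R γ : ℝ) (hB : 0 < B) (hR : 0 < R) (hγ : 0 < γ)
    (hXbound : ∀ᵐ ω ∂μ, Real.sqrt (∑ i, X ω i ^ 2) ≤ B)
    (wstar : Fin d → ℝ) (hwstar : Real.sqrt (∑ i, wstar i ^ 2) ≤ R)
    (hσderiv : ∀ t ∈ Set.Icc (-(B * R)) (B * R), γ ≤ deriv σ t ∧ deriv σ t ≤ 1)
    (y : Ω → ℝ)
    (hy : ∀ ω, y ω = σ (∑ i, wstar i * X ω i) + ε ω)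
    (hcond : μ[ε | MeasurableSpace.comap X inferInstance] =ᵐ[μ] 0)
    (hint : ∀ w : Fin d → ℝ, Integrable (fun ω => (y ω - σ (∑ i, w i * X ω i)) ^ 2) μ)
    (hintgrad : ∀ w : Fin d → ℝ, ∀ i : Fin d, Integrable
      (fun ω => (σ (∑ j, w j * X ω j) - σ (∑ j, wstar j * X ω j))
        * deriv σ (∑ j, w j * X ω j) * X ω i) μ)
    (L : (Fin d → ℝ) → ℝ)
    (hL : ∀ w, L w = (1 / 2 : ℝ) * ∫ ω, (y ω - σ (∑ i, w i * X ω i)) ^ 2 ∂μ)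
    (gradL : (Fin d → ℝ) → (Fin d → ℝ))
    (hgradL : ∀ w i, gradL w i = ∫ ω, (σ (∑ j, w j * X ω j) - σ (∑ j, wstar j * X ω j))
        * deriv σ (∑ j, w j * X ω j) * X ω i ∂μ) :
    ∀ w : Fin d → ℝ, Real.sqrt (∑ i, w i ^ 2) ≤ R →
      2 * γ * (L w - L wstar) ≤ ∑ i, gradL w i * (w i - wstar i) := by
  intro w hw
  classical
  -- measurability facts
  have hXi : ∀ i, Measurable fun ω => X ω i := fun i => (measurable_pi_apply i).comp hX
  have hameas : Measurable fun ω => ∑ j, w j * X ω j :=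
    Finset.measurable_sum _ (fun i _ => (hXi i).const_mul _)
  have hbmeas : Measurable fun ω => ∑ j, wstar j * X ω j :=
    Finset.measurable_sum _ (fun i _ => (hXi i).const_mul _)
  have hσc : Continuous σ := hσdiff.continuous
  have hΔmeas : Measurable fun ω => σ (∑ j, w j * X ω j) - σ (∑ j, wstar j * X ω j) :=
    (hσc.measurable.comp hameas).sub (hσc.measurable.comp hbmeas)
  -- Cauchy-Schwarz bounds
  have habs : ∀ (v : Fin d → ℝ), Real.sqrt (∑ i, v i ^ 2) ≤ R →
      ∀ᵐ ω ∂μ, |∑ j, v j * X ω j| ≤ B * R := by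
    intro v hv
    filter_upwards [hXbound] with ω hω
    have h1 : (∑ j, v j * X ω j) ^ 2 ≤ (∑ j, v j ^ 2) * ∑ j, X ω j ^ 2 :=
      Finset.sum_mul_sq_le_sq_mul_sq _ _ _
    calc |∑ j, v j * X ω j| = Real.sqrt ((∑ j, v j * X ω j) ^ 2) :=
          (Real.sqrt_sq_eq_abs _).symm
      _ ≤ Real.sqrt ((∑ j, v j ^ 2) * ∑ j, X ω j ^ 2) := Real.sqrt_le_sqrt h1
      _ = Real.sqrt (∑ j, v j ^ 2) * Real.sqrt (∑ j, X ω j ^ 2) :=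
          Real.sqrt_mul (by positivity) _
      _ ≤ R * B := mul_le_mul hv hω (Real.sqrt_nonneg _) hR.le
      _ = B * R := mul_comm _ _
  have ha_bd := habs w hw
  have hb_bd := habs wstar hwstar
  -- bound on the difference of σ's
  set C : ℝ := σ (B * R) - σ (-(B * R)) with hC
  have hΔbd : ∀ᵐ ω ∂μ, |σ (∑ j, w j * X ω j) - σ (∑ j, wstar j * X ω j)| ≤ C := by
    filter_upwards [ha_bd, hb_bd] with ω h1 h2
    obtain ⟨h1a, h1b⟩ := abs_le.mp h1
    obtain ⟨h2a, h2b⟩ := abs_le.mp h2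
    have := hσmono.monotone h1a
    have := hσmono.monotone h1b
    have := hσmono.monotone h2a
    have := hσmono.monotone h2b
    rw [abs_le]
    constructor <;> simp only [hC] <;> linarith
  -- integrability facts
  have hε2 : Integrable (fun ω => ε ω ^ 2) μ := by
    refine (hint wstar).congr (Filter.Eventually.of_forall fun ω => ?_)
    simp only [hy]; ring
  have hεL1 : Integrable ε μ :=
    ((memLp_two_iff_integrable_sq hε.aestronglyMeasurable).mpr hε2).integrable one_le_two
  have hΔ2int : Integrable (fun ω =>
      (σ (∑ j, w j * X ω j) - σ (∑ j, wstar j * X ω j)) ^ 2) μ := by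
    refine Integrable.mono' (integrable_const (C ^ 2))
      ((hΔmeas.pow_const 2).aestronglyMeasurable) ?_
    filter_upwards [hΔbd] with ω hω
    rw [Real.norm_eq_abs, abs_of_nonneg (sq_nonneg _), ← sq_abs]
    exact pow_le_pow_left₀ (abs_nonneg _) hω 2
  have hεΔint : Integrable (fun ω =>
      (σ (∑ j, w j * X ω j) - σ (∑ j, wstar j * X ω j)) * ε ω) μ := by
    refine Integrable.mono' (hεL1.abs.const_mul C)
      ((hΔmeas.mul hε).aestronglyMeasurable) ?_
    filter_upwards [hΔbd] with ω hω
    rw [Real.norm_eq_abs, abs_mul]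
    exact mul_le_mul_of_nonneg_right hω (abs_nonneg _)
  -- the cross term vanishes
  have hm : MeasurableSpace.comap X inferInstance ≤ ‹MeasurableSpace Ω› := hX.comap_le
  have hΔm : StronglyMeasurable[MeasurableSpace.comap X inferInstance]
      (fun ω => σ (∑ j, w j * X ω j) - σ (∑ j, wstar j * X ω j)) := by
    have hXm : Measurable[MeasurableSpace.comap X inferInstance] X :=
      Measurable.of_comap_le le_rfl
    have hg : Measurable fun v : Fin d → ℝ =>
        σ (∑ j, w j * v j) - σ (∑ j, wstar j * v j) := by
      refine ((hσc.measurable.comp ?_).sub (hσc.measurable.comp ?_)) <;>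
        exact Finset.measurable_sum _ (fun i _ => (measurable_pi_apply i).const_mul _)
    exact (hg.comp hXm).stronglyMeasurable
  haveI : SigmaFinite (μ.trim hm) := by
    haveI := isFiniteMeasure_trim hm (μ := μ)
    infer_instance
  have hcross : ∫ ω, (σ (∑ j, w j * X ω j) - σ (∑ j, wstar j * X ω j)) * ε ω ∂μ = 0 := by
    have h1 : ∫ ω, ((fun ω => σ (∑ j, w j * X ω j) - σ (∑ j, wstar j * X ω j)) * ε) ω ∂μ
        = ∫ ω, (μ[(fun ω => σ (∑ j, w j * X ω j) - σ (∑ j, wstar j * X ω j)) * ε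
            | MeasurableSpace.comap X inferInstance]) ω ∂μ := (integral_condExp hm).symm
    have h2 := condExp_mul_of_stronglyMeasurable_left hΔm (by exact hεΔint) hεL1
    have h3 : (fun ω => σ (∑ j, w j * X ω j) - σ (∑ j, wstar j * X ω j))
        * μ[ε | MeasurableSpace.comap X inferInstance] =ᵐ[μ] 0 := by
      filter_upwards [hcond] with ω hω
      simp [Pi.mul_apply, hω]
    calc ∫ ω, (σ (∑ j, w j * X ω j) - σ (∑ j, wstar j * X ω j)) * ε ω ∂μ
        = ∫ ω, ((fun ω => σ (∑ j, w j * X ω j) - σ (∑ j, wstar j * X ω j)) * ε) ω ∂μ := by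
          simp [Pi.mul_apply]
      _ = ∫ ω, (μ[(fun ω => σ (∑ j, w j * X ω j) - σ (∑ j, wstar j * X ω j)) * ε
            | MeasurableSpace.comap X inferInstance]) ω ∂μ := h1
      _ = 0 := by rw [integral_congr_ae (h2.trans h3)]; simp
  -- risk difference
  have hLdiff : L w - L wstar
      = (1 / 2 : ℝ) * ∫ ω, (σ (∑ j, w j * X ω j) - σ (∑ j, wstar j * X ω j)) ^ 2 ∂μ := by
    have e1 : ∀ ω, (y ω - σ (∑ i, w i * X ω i)) ^ 2
        = ((σ (∑ j, w j * X ω j) - σ (∑ j, wstar j * X ω j)) ^ 2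
          - 2 * ((σ (∑ j, w j * X ω j) - σ (∑ j, wstar j * X ω j)) * ε ω)) + ε ω ^ 2 := by
      intro ω; rw [hy ω]; ring
    have e2 : ∀ ω, (y ω - σ (∑ i, wstar i * X ω i)) ^ 2 = ε ω ^ 2 := fun ω => by
      rw [hy ω]; ring
    have hsub : Integrable (fun ω => (σ (∑ j, w j * X ω j) - σ (∑ j, wstar j * X ω j)) ^ 2
        - 2 * ((σ (∑ j, w j * X ω j) - σ (∑ j, wstar j * X ω j)) * ε ω)) μ :=
      hΔ2int.sub (hεΔint.const_mul 2)
    rw [hL w, hL wstar, integral_congr_ae (Filter.Eventually.of_forall e1),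
      integral_congr_ae (Filter.Eventually.of_forall e2),
      integral_add hsub hε2,
      integral_sub hΔ2int (hεΔint.const_mul 2), MeasureTheory.integral_const_mul, hcross]
    ring
  -- gradient inner product as a single integral
  have hFint : Integrable (fun ω =>
      (σ (∑ j, w j * X ω j) - σ (∑ j, wstar j * X ω j)) * deriv σ (∑ j, w j * X ω j)
        * ((∑ j, w j * X ω j) - (∑ j, wstar j * X ω j))) μ := by
    have := integrable_finset_sum (μ := μ) Finset.univ
      (f := fun i ω => (σ (∑ j, w j * X ω j) - σ (∑ j, wstar j * X ω j))
        * deriv σ (∑ j, w j * X ω j) * X ω i * (w i - wstar i))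
      (fun i _ => (hintgrad w i).mul_const _)
    refine this.congr (Filter.Eventually.of_forall fun ω => ?_)
    simp only [mul_assoc, ← Finset.mul_sum]
    congr 1
    congr 1
    rw [← Finset.sum_sub_distrib]
    exact Finset.sum_congr rfl fun i _ => by ring
  have hsum : ∑ i, gradL w i * (w i - wstar i)
      = ∫ ω, (σ (∑ j, w j * X ω j) - σ (∑ j, wstar j * X ω j))
          * deriv σ (∑ j, w j * X ω j)
          * ((∑ j, w j * X ω j) - (∑ j, wstar j * X ω j)) ∂μ := by
    have h1 : ∀ i : Fin d, gradL w i * (w i - wstar i)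
        = ∫ ω, (σ (∑ j, w j * X ω j) - σ (∑ j, wstar j * X ω j))
            * deriv σ (∑ j, w j * X ω j) * X ω i * (w i - wstar i) ∂μ := by
      intro i
      rw [hgradL w i, ← integral_mul_const]
    rw [Finset.sum_congr rfl (fun i _ => h1 i),
      ← integral_finset_sum _ (fun i _ => (hintgrad w i).mul_const _)]
    refine integral_congr_ae (Filter.Eventually.of_forall fun ω => ?_)
    simp only [mul_assoc, ← Finset.mul_sum]
    congr 1
    congr 1
    rw [← Finset.sum_sub_distrib]
    exact Finset.sum_congr rfl fun i _ => by ring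
  -- final inequality
  rw [hLdiff, hsum]
  have hmono : ∫ ω, γ * (σ (∑ j, w j * X ω j) - σ (∑ j, wstar j * X ω j)) ^ 2 ∂μ
      ≤ ∫ ω, (σ (∑ j, w j * X ω j) - σ (∑ j, wstar j * X ω j))
          * deriv σ (∑ j, w j * X ω j)
          * ((∑ j, w j * X ω j) - (∑ j, wstar j * X ω j)) ∂μ := by
    refine integral_mono_ae (hΔ2int.const_mul γ) hFint ?_
    filter_upwards [ha_bd, hb_bd] with ω h1 h2
    exact pt_ineq σ hσdiff γ (B * R) hγ hσderiv _ _ h1 h2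
  calc 2 * γ * ((1 / 2 : ℝ) * ∫ ω, (σ (∑ j, w j * X ω j) - σ (∑ j, wstar j * X ω j)) ^ 2 ∂μ)
      = ∫ ω, γ * (σ (∑ j, w j * X ω j) - σ (∑ j, wstar j * X ω j)) ^ 2 ∂μ := by
        rw [MeasureTheory.integral_const_mul]; ring
    _ ≤ _ := hmono
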